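/- For every natural number N, the set ℤ × {0,1,…,N} is a unique expansion set. Precisely: let a : ℤ → ℕ → ℂ satisfy a(n)(k) = 0 whenever k > N, and suppose there is a nonempty open subset U of ℂ with 0 ∉ U such that for every z ∈ U the family (a(n)(k) · zⁿ · (log z)ᵏ)_{n∈ℤ, 0≤k≤N} is absolutely summable with sum equal to 0, where log denotes the principal branch of the complex logarithm. Then a(n)(k) = 0 for all n ∈ ℤ and all k. -/

import Mathlib

section AuxLemmas
open Complex Polynomial MeasureTheory

lemma aux_summable {a : ℤ → ℕ → ℂ} {z : ℂ} (hz0 : z ≠ 0) (hz1 : z ≠ 1)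
    (h : Summable (fun p : ℤ × ℕ => ‖a p.1 p.2 * z ^ p.1 * Complex.log z ^ p.2‖)) (k : ℕ) :
    Summable (fun n : ℤ => ‖a n k‖ * ‖z‖ ^ n) := by
  have hlog : Complex.log z ≠ 0 := by
    intro hl
    have := Complex.exp_log hz0
    rw [hl, Complex.exp_zero] at this
    exact hz1 this.symm
  have hc : (‖Complex.log z‖ ^ k : ℝ) ≠ 0 := by
    simpa using pow_ne_zero k (norm_ne_zero_iff.mpr hlog)
  have hinj : Function.Injective (fun n : ℤ => ((n, k) : ℤ × ℕ)) :=
    fun n m hnm => congrArg Prod.fst hnm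
  have h1 := h.comp_injective hinj
  have h2 : Summable (fun n : ℤ => (‖a n k‖ * ‖z‖ ^ n) * ‖Complex.log z‖ ^ k) := by
    refine h1.congr fun n => ?_
    simp [Function.comp, norm_mul, norm_zpow, norm_pow]
  have h3 := h2.mul_right (‖Complex.log z‖ ^ k)⁻¹
  refine h3.congr fun n => ?_
  rw [mul_assoc, mul_inv_cancel₀ hc, mul_one]

lemma aux_rearrange {N : ℕ} {a : ℤ → ℕ → ℂ} (ha : ∀ (n : ℤ) (k : ℕ), N < k → a n k = 0) {z : ℂ}
    (hS : Summable (fun p : ℤ × ℕ => ‖a p.1 p.2 * z ^ p.1 * Complex.log z ^ p.2‖))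
    (hT : ∑' p : ℤ × ℕ, a p.1 p.2 * z ^ p.1 * Complex.log z ^ p.2 = 0) :
    ∑ k ∈ Finset.range (N + 1), (∑' n : ℤ, a n k * z ^ n) * Complex.log z ^ k = 0 := by
  have hsum : Summable (fun p : ℤ × ℕ => a p.1 p.2 * z ^ p.1 * Complex.log z ^ p.2) :=
    hS.of_norm
  have hsum' : Summable (fun q : ℕ × ℤ => a q.2 q.1 * z ^ q.2 * Complex.log z ^ q.1) := by
    have := (Equiv.prodComm ℕ ℤ).summable_iff.mpr hsum
    exact this.congr fun q => rfl
  calc ∑ k ∈ Finset.range (N + 1), (∑' n : ℤ, a n k * z ^ n) * Complex.log z ^ k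
      = ∑' k : ℕ, (∑' n : ℤ, a n k * z ^ n) * Complex.log z ^ k := by
        refine (tsum_eq_sum ?_).symm
        intro k hk
        have hN : N < k := by
          by_contra hc
          exact hk (Finset.mem_range.mpr (by omega))
        have : (fun n : ℤ => a n k * z ^ n) = fun _ => 0 := by
          funext n
          rw [ha n k hN, zero_mul]
        rw [this, tsum_zero, zero_mul]
    _ = ∑' k : ℕ, ∑' n : ℤ, a n k * z ^ n * Complex.log z ^ k := by
        refine tsum_congr fun k => ?_
        rw [tsum_mul_right]
    _ = ∑' q : ℕ × ℤ, a q.2 q.1 * z ^ q.2 * Complex.log z ^ q.1 := by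
        refine (Summable.tsum_prod' hsum' fun k => ?_).symm
        exact hsum'.prod_factor k
    _ = ∑' p : ℤ × ℕ, a p.1 p.2 * z ^ p.1 * Complex.log z ^ p.2 := by
        exact (Equiv.prodComm ℕ ℤ).tsum_eq
          (f := fun p : ℤ × ℕ => a p.1 p.2 * z ^ p.1 * Complex.log z ^ p.2)
    _ = 0 := hT

lemma aux_poly {N : ℕ} (c : ℕ → ℂ) (w0 : ℂ)
    (h : ∀ m : ℤ, ∑ k ∈ Finset.range (N + 1),
      c k * (w0 + (2 * Real.pi * Complex.I) * m) ^ k = 0) :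
    ∀ k, k ≤ N → c k = 0 := by
  set t : ℂ := 2 * Real.pi * Complex.I with ht_def
  have ht : t ≠ 0 := by simp [ht_def, Real.pi_ne_zero, Complex.I_ne_zero]
  set P : Polynomial ℂ :=
    ∑ k ∈ Finset.range (N + 1), Polynomial.C (c k) * (Polynomial.C w0 + Polynomial.X) ^ k with hP
  have heval : ∀ x : ℂ, P.eval x = ∑ k ∈ Finset.range (N + 1), c k * (w0 + x) ^ k := by
    intro x
    rw [hP]
    simp [Polynomial.eval_finset_sum]
  have hroot : ∀ m : ℤ, P.IsRoot (t * m) := by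
    intro m
    show P.eval _ = 0
    rw [heval]
    exact h m
  have hinf : {x : ℂ | P.IsRoot x}.Infinite := by
    refine Set.infinite_of_injective_forall_mem (f := fun m : ℤ => t * (m : ℂ)) ?_ ?_
    · intro a b hab
      simp only at hab
      exact_mod_cast mul_left_cancel₀ ht hab
    · exact fun m => hroot m
  have hP0 : P = 0 := P.eq_zero_of_infinite_isRoot hinf
  have hQ : P.comp (Polynomial.X - Polynomial.C w0) =
      ∑ k ∈ Finset.range (N + 1), Polynomial.C (c k) * Polynomial.X ^ k := by
    rw [hP]
    simp [Polynomial.mul_comp, Polynomial.pow_comp, Polynomial.add_comp]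
  intro k hk
  have hco := congrArg (fun q => Polynomial.coeff q k) (hQ.symm.trans (by rw [hP0, Polynomial.zero_comp]))
  simp only [Polynomial.finset_sum_coeff, Polynomial.coeff_C_mul, Polynomial.coeff_X_pow,
    Polynomial.coeff_zero, mul_ite, mul_one, mul_zero] at hco
  rwa [Finset.sum_ite_eq (Finset.range (N + 1)) k c,
    if_pos (Finset.mem_range.mpr (Nat.lt_succ_of_le hk))] at hco

lemma aux_coeff {c : ℤ → ℂ} {r : ℝ} (hr : 0 < r)
    (hs : Summable fun n : ℤ => ‖c n‖ * r ^ n)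
    (hz : ∀ z : ℂ, ‖z‖ = r → ∑' n : ℤ, c n * z ^ n = 0) (m : ℤ) : c m = 0 := by
  set μ : Measure ℝ := volume.restrict (Set.Ioc 0 (2 * Real.pi)) with hμ
  set Z : ℝ → ℂ := fun θ => circleMap 0 r θ with hZdef
  have hZ_ne : ∀ θ, Z θ ≠ 0 := fun θ => circleMap_ne_center hr.ne'
  have hZ_norm : ∀ θ, ‖Z θ‖ = r := fun θ => by
    simp [hZdef, norm_circleMap_zero, abs_of_pos hr]
  set G : ℤ → ℝ → ℂ := fun n θ => c n * ((Z θ * Complex.I) * (Z θ) ^ (n - m - 1)) with hG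
  have hG_cont : ∀ n, Continuous (G n) := by
    intro n
    apply continuous_const.mul
    exact ((continuous_circleMap 0 r).mul continuous_const).mul
      ((continuous_circleMap 0 r).zpow₀ _ (fun θ => Or.inl (hZ_ne θ)))
  have hG_int : ∀ n, Integrable (G n) μ := fun n => (hG_cont n).integrableOn_Ioc
  have hGnorm : ∀ n θ, ‖G n θ‖ = ‖c n‖ * (r * r ^ (n - m - 1)) := by
    intro n θ
    rw [hG]
    simp only [norm_mul, norm_zpow, Complex.norm_I, hZ_norm θ]
    ring
  have hint_norm : ∀ n, ∫ θ, ‖G n θ‖ ∂μ = (2 * Real.pi) * (‖c n‖ * (r * r ^ (n - m - 1))) := by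
    intro n
    rw [show (fun θ => ‖G n θ‖) = fun _ : ℝ => ‖c n‖ * (r * r ^ (n - m - 1)) from
      funext (hGnorm n)]
    rw [integral_const]
    rw [hμ, measureReal_def, Measure.restrict_apply_univ, Real.volume_Ioc]
    rw [ENNReal.toReal_ofReal (by nlinarith [Real.pi_pos])]
    rw [smul_eq_mul]
    ring_nf
  have hrpow : ∀ n : ℤ, r ^ (n - m - 1) = r ^ n * r ^ (-m - 1) := by
    intro n
    rw [← zpow_add₀ hr.ne']
    congr 1
    ring
  have hsum_norm : Summable fun n => ∫ θ, ‖G n θ‖ ∂μ := by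
    refine (hs.mul_left (2 * Real.pi * (r * r ^ (-m - 1)))).congr fun n => ?_
    rw [hint_norm n, hrpow n]
    ring
  have hkey := hasSum_integral_of_summable_integral_norm hG_int hsum_norm
  have htsum : ∀ θ, ∑' n, G n θ = 0 := by
    intro θ
    have hzz : ∀ n : ℤ, G n θ = (c n * (Z θ) ^ n) * ((Z θ * Complex.I) * (Z θ) ^ (-m - 1)) := by
      intro n
      show c n * ((Z θ * Complex.I) * (Z θ) ^ (n - m - 1)) = _
      have h1 : (Z θ) ^ (n - m - 1) = (Z θ) ^ n * (Z θ) ^ (-m - 1) := by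
        rw [← zpow_add₀ (hZ_ne θ)]
        congr 1
        ring
      rw [h1]
      ring
    calc ∑' n, G n θ
        = (∑' n, c n * (Z θ) ^ n) * ((Z θ * Complex.I) * (Z θ) ^ (-m - 1)) := by
          rw [← tsum_mul_right]
          exact tsum_congr hzz
      _ = 0 := by rw [hz (Z θ) (hZ_norm θ), zero_mul]
  rw [show (∫ θ, (∑' n, G n θ) ∂μ) = 0 by simp only [htsum, integral_zero]] at hkey
  have hcirc : ∀ p : ℤ, (∮ z in C(0, r), z ^ p) = ∫ θ, (Z θ * Complex.I) * (Z θ) ^ p ∂μ := by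
    intro p
    rw [circleIntegral, intervalIntegral.integral_of_le Real.two_pi_pos.le]
    congr 1
    funext θ
    simp [deriv_circleMap, smul_eq_mul, hZdef]
  have hIG : ∀ n, ∫ θ, G n θ ∂μ = c n * (∮ z in C(0, r), z ^ (n - m - 1)) := by
    intro n
    rw [hcirc (n - m - 1)]
    exact integral_const_mul _ _
  have hval : ∀ n, (∫ θ, G n θ ∂μ) = if n = m then c m * (2 * Real.pi * Complex.I) else 0 := by
    intro n
    by_cases h : n = m
    · subst h
      rw [hIG n, if_pos rfl]
      have h2pi := circleIntegral.integral_sub_inv_of_mem_ball (c := (0:ℂ)) (w := (0:ℂ)) (Metric.mem_ball_self hr)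
      simp only [sub_zero] at h2pi
      have : (∮ z in C(0, r), z ^ (n - n - 1 : ℤ)) = ∮ z in C(0, r), z⁻¹ := by
        congr 1
        funext z
        norm_num
      rw [this, h2pi]
    · rw [hIG n, if_neg h]
      have hne : (n - m - 1 : ℤ) ≠ -1 := by omega
      have h0 := circleIntegral.integral_sub_zpow_of_ne hne 0 0 r
      simp only [sub_zero] at h0
      rw [h0, mul_zero]
  rw [show (fun n => ∫ θ, G n θ ∂μ) =
      (fun n => if n = m then c m * (2 * Real.pi * Complex.I) else 0) from funext hval] at hkey
  have h2 : HasSum (fun n : ℤ => if n = m then c m * (2 * Real.pi * Complex.I) else 0)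
      (c m * (2 * Real.pi * Complex.I)) := hasSum_ite_eq m _
  have := h2.unique hkey
  have hπ : (2 * Real.pi * Complex.I : ℂ) ≠ 0 := by
    simp [Real.pi_ne_zero, Complex.I_ne_zero]
  exact (mul_eq_zero.mp this).resolve_right hπ

lemma zpow_bound {x r1 r2 : ℝ} (h1 : 0 < r1) (hx1 : r1 < x) (hx2 : x < r2) (n : ℤ) :
    x ^ n ≤ r1 ^ n + r2 ^ n := by
  have hx0 : 0 < x := lt_trans h1 hx1
  have h2 : (0:ℝ) < r2 := lt_trans hx0 hx2
  rcases le_or_gt 0 n with hn | hn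
  · obtain ⟨m, rfl⟩ := Int.eq_ofNat_of_zero_le hn
    rw [zpow_natCast, zpow_natCast, zpow_natCast]
    have := pow_le_pow_left₀ hx0.le hx2.le m
    have hr1 : (0:ℝ) ≤ r1 ^ m := by positivity
    linarith
  · obtain ⟨m, rfl⟩ := Int.exists_eq_neg_ofNat hn.le
    rw [zpow_neg, zpow_neg, zpow_natCast, zpow_natCast]
    have hle : r1 ^ m ≤ x ^ m := pow_le_pow_left₀ h1.le hx1.le m
    have := inv_anti₀ (by positivity : (0:ℝ) < r1 ^ m) hle
    have hr2 : (0:ℝ) ≤ (r2 ^ m)⁻¹ := by positivity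
    rw [zpow_neg, zpow_natCast]
    linarith

lemma aux_diff {b : ℤ → ℂ} {r1 r2 : ℝ} (h1 : 0 < r1)
    (hs1 : Summable fun n : ℤ => ‖b n‖ * r1 ^ n) (hs2 : Summable fun n : ℤ => ‖b n‖ * r2 ^ n) :
    DifferentiableOn ℂ (fun z => ∑' n : ℤ, b n * z ^ n) {z : ℂ | r1 < ‖z‖ ∧ ‖z‖ < r2} := by
  have hopen : IsOpen {z : ℂ | r1 < ‖z‖ ∧ ‖z‖ < r2} := by
    have : {z : ℂ | r1 < ‖z‖ ∧ ‖z‖ < r2} = {z : ℂ | r1 < ‖z‖} ∩ {z : ℂ | ‖z‖ < r2} := rfl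
    rw [this]
    exact (isOpen_lt continuous_const continuous_norm).inter
      (isOpen_lt continuous_norm continuous_const)
  refine Complex.differentiableOn_tsum_of_summable_norm
    (u := fun n : ℤ => ‖b n‖ * r1 ^ n + ‖b n‖ * r2 ^ n) (hs1.add hs2) ?_ hopen ?_
  · intro n
    intro z hz
    have hz0 : z ≠ 0 := by
      intro h
      rw [h] at hz
      simp at hz
      linarith [hz.1]
    exact ((differentiableAt_zpow.mpr (Or.inl hz0)).const_mul (b n)).differentiableWithinAt
  · intro n z hz
    rw [norm_mul, norm_zpow]
    calc ‖b n‖ * ‖z‖ ^ n ≤ ‖b n‖ * (r1 ^ n + r2 ^ n) :=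
          mul_le_mul_of_nonneg_left (zpow_bound h1 hz.1 hz.2 n) (norm_nonneg _)
      _ = ‖b n‖ * r1 ^ n + ‖b n‖ * r2 ^ n := by ring

end AuxLemmas

/-- `ℤ × {0,1,…,N}` is a unique expansion set: if a series
  `∑_{n∈ℤ, 0≤k≤N} a(n)(k) zⁿ (log z)ᵏ` converges absolutely to `0` for all `z`
  in some nonempty open set `U ⊆ ℂ` with `0 ∉ U`, then all coefficients vanish.
  (log is the principal branch of the complex logarithm.) -/

theorem int_unique_expansion_set
    (N : ℕ) (a : ℤ → ℕ → ℂ) (ha : ∀ (n : ℤ) (k : ℕ), N < k → a n k = 0)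
    (U : Set ℂ) (hU : IsOpen U) (hne : U.Nonempty) (h0 : (0 : ℂ) ∉ U)
    (hsum : ∀ z ∈ U,
      Summable (fun p : ℤ × ℕ => ‖a p.1 p.2 * z ^ p.1 * Complex.log z ^ p.2‖) ∧
        ∑' p : ℤ × ℕ, a p.1 p.2 * z ^ p.1 * Complex.log z ^ p.2 = 0) :
    ∀ (n : ℤ) (k : ℕ), a n k = 0 := by
  intro n k
  by_cases hkN : N < k
  · exact ha n k hkN
  push_neg at hkN
  -- basic helper
  have hne01 : ∀ z : ℂ, z.im ≠ 0 → z ≠ 0 ∧ z ≠ 1 := by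
    intro z h
    constructor <;> intro h' <;> rw [h'] at h <;> simp at h
  -- geometry: find a good point z1 with nonreal value, and a ball around it inside U
  obtain ⟨z0, hz0U⟩ := hne
  obtain ⟨ε, hε, hball⟩ := Metric.isOpen_iff.mp hU z0 hz0U
  set s : ℝ := if 0 ≤ z0.im then ε / 2 else -(ε / 2) with hs_def
  set z1 : ℂ := z0 + (s : ℂ) * Complex.I with hz1def
  have him : z1.im = z0.im + s := by simp [hz1def]
  have hz1im : z1.im ≠ 0 := by
    rw [him, hs_def]
    split_ifs with h
    · exact ne_of_gt (by linarith)
    · push_neg at h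
      exact ne_of_lt (by linarith)
  have hsabs : |s| = ε / 2 := by
    rw [hs_def]
    split_ifs with h
    · exact abs_of_pos (by linarith)
    · rw [abs_neg]
      exact abs_of_pos (by linarith)
  have hz1U : z1 ∈ U := by
    apply hball
    have : dist z1 z0 = |s| := by
      rw [Complex.dist_eq, hz1def]
      simp [Complex.norm_real]
    rw [Metric.mem_ball, this, hsabs]
    linarith
  obtain ⟨hz1ne0, hz1ne1⟩ := hne01 z1 hz1im
  have hR : 0 < ‖z1‖ := norm_pos_iff.mpr hz1ne0
  set δ : ℝ := min (ε / 2) (‖z1‖ / 2) with hδdef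
  have hδ : 0 < δ := lt_min (by linarith) (by linarith)
  have hδ2 : δ ≤ ‖z1‖ / 2 := min_le_right _ _
  have hBU : Metric.ball z1 δ ⊆ U := by
    intro w hw
    apply hball
    rw [Metric.mem_ball] at hw ⊢
    have h1 : dist z1 z0 = |s| := by
      rw [Complex.dist_eq, hz1def]
      simp [Complex.norm_real]
    calc dist w z0 ≤ dist w z1 + dist z1 z0 := dist_triangle _ _ _
      _ < δ + ε / 2 := by rw [h1, hsabs]; linarith
      _ ≤ ε := by
          have := min_le_left (ε / 2) (‖z1‖ / 2)
          rw [hδdef]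
          linarith [min_le_left (ε / 2) (‖z1‖ / 2)]
  set t : ℝ := δ / (2 * ‖z1‖) with ht_def
  have ht_pos : 0 < t := by positivity
  have htz1 : t * ‖z1‖ = δ / 2 := by
    rw [ht_def]
    field_simp [hR.ne']
  have ht4 : t ≤ 1 / 4 := by
    rw [ht_def]
    rw [div_le_div_iff₀ (by positivity) (by norm_num)]
    linarith
  set r1 : ℝ := ‖z1‖ - δ / 2 with hr1def
  set r2 : ℝ := ‖z1‖ + δ / 2 with hr2def
  have hr1_pos : 0 < r1 := by rw [hr1def]; linarith
  have hr2_pos : 0 < r2 := by rw [hr2def]; linarith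
  have hr1R : r1 < ‖z1‖ := by rw [hr1def]; linarith
  have hRr2 : ‖z1‖ < r2 := by rw [hr2def]; linarith
  set zA : ℂ := ((1 - t : ℝ) : ℂ) * z1 with hzAdef
  set zB : ℂ := ((1 + t : ℝ) : ℂ) * z1 with hzBdef
  have hzA_norm : ‖zA‖ = r1 := by
    rw [hzAdef, norm_mul, Complex.norm_real, Real.norm_eq_abs, abs_of_pos (by linarith), hr1def]
    nlinarith [htz1]
  have hzB_norm : ‖zB‖ = r2 := by
    rw [hzBdef, norm_mul, Complex.norm_real, Real.norm_eq_abs, abs_of_pos (by linarith), hr2def]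
    nlinarith [htz1]
  have hzA_U : zA ∈ U := by
    apply hBU
    rw [Metric.mem_ball, Complex.dist_eq]
    have : zA - z1 = ((-t : ℝ) : ℂ) * z1 := by rw [hzAdef]; push_cast; ring
    rw [this]
    rw [norm_mul, Complex.norm_real, Real.norm_eq_abs, abs_neg, abs_of_pos ht_pos]
    calc t * ‖z1‖ = δ / 2 := by rw [← htz1]
      _ < δ := by linarith
  have hzB_U : zB ∈ U := by
    apply hBU
    rw [Metric.mem_ball, Complex.dist_eq]
    have : zB - z1 = ((t : ℝ) : ℂ) * z1 := by rw [hzBdef]; push_cast; ring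
    rw [this]
    rw [norm_mul, Complex.norm_real, Real.norm_eq_abs, abs_of_pos ht_pos]
    calc t * ‖z1‖ = δ / 2 := by rw [← htz1]
      _ < δ := by linarith
  have hzA_im : zA.im ≠ 0 := by
    have h' : zA.im = (1 - t) * z1.im := by
      rw [hzAdef]
      simp [Complex.mul_im]
    rw [h']
    exact mul_ne_zero (by linarith) hz1im
  have hzB_im : zB.im ≠ 0 := by
    have h' : zB.im = (1 + t) * z1.im := by
      rw [hzBdef]
      simp [Complex.mul_im]
    rw [h']
    exact mul_ne_zero (by linarith) hz1im
  obtain ⟨hzAne0, hzAne1⟩ := hne01 zA hzA_im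
  obtain ⟨hzBne0, hzBne1⟩ := hne01 zB hzB_im
  -- summability at the three radii
  have hsA : ∀ j : ℕ, Summable fun n : ℤ => ‖a n j‖ * r1 ^ n := by
    intro j
    have := aux_summable hzAne0 hzAne1 (hsum zA hzA_U).1 j
    rwa [hzA_norm] at this
  have hsB : ∀ j : ℕ, Summable fun n : ℤ => ‖a n j‖ * r2 ^ n := by
    intro j
    have := aux_summable hzBne0 hzBne1 (hsum zB hzB_U).1 j
    rwa [hzB_norm] at this
  have hs1 : ∀ j : ℕ, Summable fun n : ℤ => ‖a n j‖ * ‖z1‖ ^ n :=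
    fun j => aux_summable hz1ne0 hz1ne1 (hsum z1 hz1U).1 j
  -- the Laurent-type functions
  set f : ℕ → ℂ → ℂ := fun j w => ∑' n : ℤ, a n j * w ^ n with hfdef
  set Ann : Set ℂ := {z : ℂ | r1 < ‖z‖ ∧ ‖z‖ < r2} with hAnn
  have hdiff : ∀ j : ℕ, DifferentiableOn ℂ (f j) Ann :=
    fun j => aux_diff hr1_pos (hsA j) (hsB j)
  -- the strip
  set S : Set ℂ := {w : ℂ | Real.log r1 < w.re ∧ w.re < Real.log r2} with hSdef
  have hSopen : IsOpen S := by
    rw [hSdef, Set.setOf_and]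
    exact (isOpen_lt continuous_const Complex.continuous_re).inter
      (isOpen_lt Complex.continuous_re continuous_const)
  have hexp_mem : ∀ w : ℂ, w ∈ S → Complex.exp w ∈ Ann := by
    intro w hw
    have hnorm : ‖Complex.exp w‖ = Real.exp w.re := by
      rw [Complex.norm_exp]
    constructor
    · rw [hnorm]
      exact (Real.log_lt_iff_lt_exp hr1_pos).mp hw.1
    · rw [hnorm]
      exact (Real.lt_log_iff_exp_lt hr2_pos).mp hw.2
  set g : ℂ → ℂ := fun w => ∑ j ∈ Finset.range (N + 1), f j (Complex.exp w) * w ^ j with hgdef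
  have hgdiff : DifferentiableOn ℂ g S := by
    apply DifferentiableOn.fun_sum
    intro j _
    apply DifferentiableOn.mul
    · exact (hdiff j).comp Complex.differentiable_exp.differentiableOn
        (fun w hw => hexp_mem w hw)
    · exact (differentiable_pow j).differentiableOn
  have hSpre : IsPreconnected S := by
    apply Convex.isPreconnected
    have : S = Complex.reLm ⁻¹' (Set.Ioo (Real.log r1) (Real.log r2)) := rfl
    rw [this]
    exact (convex_Ioo _ _).linear_preimage _
  -- the sums vanish on U
  have hFz : ∀ z ∈ U, ∑ j ∈ Finset.range (N + 1), f j z * Complex.log z ^ j = 0 :=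
    fun z hz => aux_rearrange ha (hsum z hz).1 (hsum z hz).2
  -- g vanishes near w1 = log z1
  set w1 : ℂ := Complex.log z1 with hw1def
  have hw1S : w1 ∈ S := by
    constructor
    · rw [hw1def, Complex.log_re]
      exact Real.log_lt_log hr1_pos hr1R
    · rw [hw1def, Complex.log_re]
      exact Real.log_lt_log hR hRr2
  set V : Set ℂ := Complex.exp ⁻¹' (Metric.ball z1 δ) ∩
    Complex.im ⁻¹' (Set.Ioo (-Real.pi) Real.pi) with hVdef
  have hVopen : IsOpen V :=
    (Metric.isOpen_ball.preimage Complex.continuous_exp).inter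
      (isOpen_Ioo.preimage Complex.continuous_im)
  have hw1V : w1 ∈ V := by
    constructor
    · show Complex.exp w1 ∈ Metric.ball z1 δ
      rw [hw1def, Complex.exp_log hz1ne0]
      exact Metric.mem_ball_self hδ
    · constructor
      · rw [hw1def, Complex.log_im]
        exact Complex.neg_pi_lt_arg z1
      · rw [hw1def, Complex.log_im]
        refine lt_of_le_of_ne (Complex.arg_le_pi z1) fun h => ?_
        exact hz1im (Complex.arg_eq_pi_iff.mp h).2
  have hgV : Set.EqOn g 0 V := by
    intro w hw
    have himw := hw.2
    simp only [Set.mem_preimage, Set.mem_Ioo] at himw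
    have hlog : Complex.log (Complex.exp w) = w := Complex.log_exp himw.1 himw.2.le
    have hFw := hFz (Complex.exp w) (hBU hw.1)
    rw [hlog] at hFw
    exact hFw
  have hg0 : Set.EqOn g 0 S :=
    (hgdiff.analyticOnNhd hSopen).eqOn_zero_of_preconnected_of_eventuallyEq_zero hSpre hw1S
      (Filter.eventuallyEq_of_mem (hVopen.mem_nhds hw1V) hgV)
  -- each f j vanishes on the annulus
  have hfzero : ∀ z ∈ Ann, ∀ j ≤ N, f j z = 0 := by
    intro z hzAnn
    have hz0 : z ≠ 0 := by
      intro h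
      rw [h] at hzAnn
      simp only [hAnn, Set.mem_setOf_eq, norm_zero] at hzAnn
      linarith [hzAnn.1]
    set w0 : ℂ := Complex.log z with hw0def
    have hw0S : w0 ∈ S := by
      constructor
      · rw [hw0def, Complex.log_re]
        exact Real.log_lt_log hr1_pos hzAnn.1
      · rw [hw0def, Complex.log_re]
        exact Real.log_lt_log (norm_pos_iff.mpr hz0) hzAnn.2
    have hm : ∀ m : ℤ, ∑ j ∈ Finset.range (N + 1),
        f j z * (w0 + (2 * Real.pi * Complex.I) * m) ^ j = 0 := by
      intro m
      set wm : ℂ := w0 + (2 * Real.pi * Complex.I) * m with hwmdef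
      have hre : wm.re = w0.re := by
        rw [hwmdef]
        simp [Complex.add_re, Complex.mul_re, Complex.mul_im]
      have hwmS : wm ∈ S := by
        constructor
        · rw [hre]; exact hw0S.1
        · rw [hre]; exact hw0S.2
      have hexpwm : Complex.exp wm = z := by
        rw [hwmdef, Complex.exp_add]
        have hcomm : (2 * (Real.pi : ℂ) * Complex.I) * (m : ℂ)
            = (m : ℂ) * (2 * (Real.pi : ℂ) * Complex.I) := by ring
        rw [hcomm, Complex.exp_int_mul_two_pi_mul_I, mul_one, hw0def, Complex.exp_log hz0]
      have hwm := hg0 hwmS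
      simp only [Pi.zero_apply] at hwm
      rw [hgdef] at hwm
      simp only at hwm
      rw [hexpwm] at hwm
      exact hwm
    exact fun j hj => aux_poly (fun j => f j z) w0 hm j hj
  -- extract coefficients on the circle of radius ‖z1‖
  refine aux_coeff hR (hs1 k) (fun z hznorm => ?_) n
  have hzAnn : z ∈ Ann := by
    constructor
    · rw [hznorm]; exact hr1R
    · rw [hznorm]; exact hRr2
  exact hfzero z hzAnn k hkN
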